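/- arXiv:2401.07493 — 3 statements merged into one kernel-verified Lean document; each statement's English description precedes it below -/
import Mathlib

section
/- Let h > 0, let η ∈ ℕ, let a₀, a₁, …, a_η ∈ ℝ be pairwise distinct centers, and let U₀, U₁, …, U_η ∈ ℝ be prescribed values. Then there exists a unique polynomial p of degree at most η such that (1/h)·∫_{a_i − h/2}^{a_i + h/2} p(ξ) dξ = U_i for every i = 0, 1, …, η. -/
open Polynomial

/-- Formal antiderivative of a real polynomial. -/
noncomputable def antider (p : ℝ[X]) : ℝ[X] :=
  p.sum fun n c => C (c / (n + 1)) * X ^ (n + 1)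

lemma derivative_antider (p : ℝ[X]) : derivative (antider p) = p := by
  rw [antider, Polynomial.sum, map_sum]
  conv_rhs => rw [p.as_sum_support]
  refine Finset.sum_congr rfl fun n _ => ?_
  have hn : (n : ℝ) + 1 ≠ 0 := by positivity
  rw [derivative_C_mul, derivative_X_pow, Nat.add_sub_cancel, ← mul_assoc, ← C_mul,
    Nat.cast_add, Nat.cast_one, div_mul_cancel₀ _ hn, C_mul_X_pow_eq_monomial]

lemma integral_eval (p : ℝ[X]) (u v : ℝ) :
    ∫ ξ in u..v, p.eval ξ = (antider p).eval v - (antider p).eval u := by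
  have key : ∀ x ∈ Set.uIcc u v, HasDerivAt (fun y => (antider p).eval y) (p.eval x) x := by
    intro x _
    simpa [derivative_antider] using (antider p).hasDerivAt x
  exact intervalIntegral.integral_eq_sub_of_hasDerivAt key ((p.continuous).intervalIntegrable u v)

lemma degree_lt_succ_iff {p : ℝ[X]} {n : ℕ} :
    p.degree < ((n + 1 : ℕ) : WithBot ℕ) ↔ p.degree ≤ (n : WithBot ℕ) := by
  by_cases h0 : p = 0
  · subst h0
    rw [degree_zero]
    refine iff_of_true ?_ bot_le
    exact bot_lt_iff_ne_bot.mpr (by simp)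
  · rw [← natDegree_lt_iff_degree_lt h0, ← natDegree_le_iff_degree_le, Nat.lt_succ_iff]

lemma avg_zero_imp_zero (h : ℝ) (hh : 0 < h) (η : ℕ) (a : Fin (η + 1) → ℝ)
    (ha : Function.Injective a) (p : ℝ[X]) (hdeg : p.degree ≤ (η : WithBot ℕ))
    (hz : ∀ i, ∫ ξ in (a i - h / 2)..(a i + h / 2), p.eval ξ = 0) : p = 0 := by
  by_contra hp
  set c : ℝ := h / 2 with hc
  set A := antider p with hA
  have hdA : derivative A = p := derivative_antider p
  have hA0 : A ≠ 0 := by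
    intro h0
    rw [h0, map_zero] at hdA
    exact hp hdA.symm
  have hnA : 0 < A.natDegree := by
    rcases Nat.eq_zero_or_pos A.natDegree with h0 | h0
    · obtain ⟨r, hr⟩ := natDegree_eq_zero.mp h0
      rw [← hr, derivative_C] at hdA
      exact absurd hdA.symm hp
    · exact h0
  have hdegp : p.degree = ((A.natDegree - 1 : ℕ) : WithBot ℕ) := by
    rw [← hdA]; exact degree_derivative_eq A hnA
  have hnp : p.natDegree = A.natDegree - 1 := natDegree_eq_of_degree_eq_some hdegp
  have hple : p.natDegree ≤ η := natDegree_le_iff_degree_le.mpr hdeg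
  have hAn : A.natDegree ≤ η + 1 := by omega
  set q : ℝ[X] := A.comp (X + C c) - A.comp (X + C (-c)) with hq
  have hqeval : ∀ i, q.eval (a i) = 0 := by
    intro i
    have hzi := hz i
    rw [integral_eval] at hzi
    simp only [hq, eval_sub, eval_comp, eval_add, eval_X, eval_C]
    rw [← sub_eq_add_neg]
    exact hzi
  have hcu : (A.comp (X + C c)).leadingCoeff = A.leadingCoeff := by
    rw [leadingCoeff_comp (by rw [natDegree_X_add_C]; exact one_ne_zero), (monic_X_add_C c).leadingCoeff,
      one_pow, mul_one]
  have hcv : (A.comp (X + C (-c))).leadingCoeff = A.leadingCoeff := by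
    rw [leadingCoeff_comp (by rw [natDegree_X_add_C]; exact one_ne_zero), (monic_X_add_C (-c)).leadingCoeff,
      one_pow, mul_one]
  have hu0 : A.comp (X + C c) ≠ 0 := by
    intro h0
    apply hA0
    rw [← leadingCoeff_eq_zero, ← hcu, h0, leadingCoeff_zero]
  have hv0 : A.comp (X + C (-c)) ≠ 0 := by
    intro h0
    apply hA0
    rw [← leadingCoeff_eq_zero, ← hcv, h0, leadingCoeff_zero]
  have hdcu : (A.comp (X + C c)).degree = (A.natDegree : WithBot ℕ) := by
    rw [degree_eq_natDegree hu0, natDegree_comp, natDegree_X_add_C, mul_one]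
  have hdcv : (A.comp (X + C (-c))).degree = (A.natDegree : WithBot ℕ) := by
    rw [degree_eq_natDegree hv0, natDegree_comp, natDegree_X_add_C, mul_one]
  have hq_lt : q.degree < (A.natDegree : WithBot ℕ) := by
    rw [hq, ← hdcu]
    exact degree_sub_lt (hdcu.trans hdcv.symm) hu0 (hcu.trans hcv.symm)
  have hq0 : q = 0 := by
    by_cases hqz : q = 0
    · exact hqz
    · refine eq_zero_of_natDegree_lt_card_of_eval_eq_zero q ha hqeval ?_
      rw [Fintype.card_fin]
      have := (natDegree_lt_iff_degree_lt hqz).mpr hq_lt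
      omega
  have hcomp : A.comp (X + C c) = A.comp (X + C (-c)) := sub_eq_zero.mp hq0
  have hper : A.comp (X + C h) = A := by
    have h2 : (A.comp (X + C c)).comp (X + C c) = (A.comp (X + C (-c))).comp (X + C c) := by
      rw [hcomp]
    rw [comp_assoc, comp_assoc] at h2
    simp only [add_comp, X_comp, C_comp] at h2
    have e1 : (X + C c + C c : ℝ[X]) = X + C h := by
      rw [add_assoc, ← C_add, hc]; ring_nf
    have e2 : (X + C c + C (-c) : ℝ[X]) = X := by
      rw [add_assoc, ← C_add]; simp
    rw [e1, e2, comp_X] at h2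
    exact h2
  have hev : ∀ x : ℝ, A.eval (x + h) = A.eval x := by
    intro x
    have := congrArg (eval x) hper
    simpa [eval_comp] using this
  have hnat : ∀ n : ℕ, A.eval (n * h) = A.eval 0 := by
    intro n
    induction n with
    | zero => simp
    | succ k ih => rw [Nat.cast_succ, add_mul, one_mul, hev, ih]
  set B : ℝ[X] := A - C (A.eval 0) with hB
  have hB0 : B ≠ 0 := by
    intro h0
    have hnd : B.natDegree = A.natDegree := natDegree_sub_C
    rw [h0, natDegree_zero] at hnd
    omega
  apply hB0
  apply eq_zero_of_infinite_isRoot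
  have hinj : Function.Injective fun n : ℕ => (n : ℝ) * h := by
    intro m n hmn
    exact_mod_cast mul_right_cancel₀ hh.ne' hmn
  have hsub : Set.range (fun n : ℕ => (n : ℝ) * h) ⊆ {x | B.IsRoot x} := by
    rintro x ⟨n, rfl⟩
    simp only [Set.mem_setOf_eq, IsRoot.def, hB, eval_sub, eval_C]
    exact sub_eq_zero.mpr (hnat n)
  exact (Set.infinite_range_of_injective hinj).mono hsub

/-- Given `η + 1` pairwise distinct centers `a_i` and prescribed values `U_i`, there is a
unique polynomial `p` of degree at most `η` whose box averages over the teeth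
`[a_i − h/2, a_i + h/2]` equal the `U_i`. -/
theorem stmt_4 (h : ℝ) (hh : 0 < h) (η : ℕ) (a : Fin (η + 1) → ℝ)
    (ha : Function.Injective a) (U : Fin (η + 1) → ℝ) :
    ∃! p : Polynomial ℝ, p.degree ≤ η ∧
      ∀ i, (1 / h) * ∫ ξ in (a i - h / 2)..(a i + h / 2), p.eval ξ = U i := by
  classical
  have hh' : (1 / h : ℝ) ≠ 0 := by positivity
  let T : Polynomial.degreeLT ℝ (η + 1) →ₗ[ℝ] (Fin (η + 1) → ℝ) :=
    { toFun := fun p i => (1 / h) * ∫ ξ in (a i - h / 2)..(a i + h / 2), (p : ℝ[X]).eval ξ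
      map_add' := by
        intro p q
        funext i
        have hip : IntervalIntegrable (fun ξ => (p : ℝ[X]).eval ξ) MeasureTheory.volume
            (a i - h / 2) (a i + h / 2) := ((p : ℝ[X]).continuous).intervalIntegrable _ _
        have hiq : IntervalIntegrable (fun ξ => (q : ℝ[X]).eval ξ) MeasureTheory.volume
            (a i - h / 2) (a i + h / 2) := ((q : ℝ[X]).continuous).intervalIntegrable _ _
        simp only [Submodule.coe_add, eval_add, Pi.add_apply]
        rw [intervalIntegral.integral_add hip hiq]
        ring
      map_smul' := by
        intro r p
        funext i
        simp only [SetLike.val_smul, smul_eq_mul, RingHom.id_apply, Pi.smul_apply]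
        have hsm : (fun ξ : ℝ => eval ξ (r • (p : ℝ[X]))) = fun ξ => r * eval ξ (p : ℝ[X]) := by
          funext ξ; simp
        simp only [hsm]
        rw [intervalIntegral.integral_const_mul]
        ring }
  have hker : ∀ p : Polynomial.degreeLT ℝ (η + 1), T p = 0 → p = 0 := by
    intro p hp
    have hdeg : (p : ℝ[X]).degree ≤ (η : WithBot ℕ) :=
      degree_lt_succ_iff.mp (Polynomial.mem_degreeLT.mp p.2)
    have hz : ∀ i, ∫ ξ in (a i - h / 2)..(a i + h / 2), (p : ℝ[X]).eval ξ = 0 := by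
      intro i
      have hpi := congrFun hp i
      simp only [T, LinearMap.coe_mk, AddHom.coe_mk, Pi.zero_apply] at hpi
      exact (mul_eq_zero.mp hpi).resolve_left hh'
    exact Subtype.ext (avg_zero_imp_zero h hh η a ha p hdeg hz)
  have hTinj : Function.Injective T :=
    LinearMap.ker_eq_bot.mp (LinearMap.ker_eq_bot'.mpr hker)
  let e := Polynomial.degreeLTEquiv ℝ (η + 1)
  let L : (Fin (η + 1) → ℝ) →ₗ[ℝ] (Fin (η + 1) → ℝ) := T ∘ₗ (e.symm : _ →ₗ[ℝ] _)
  have hLinj : Function.Injective L := hTinj.comp e.symm.injective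
  have hLsurj : Function.Surjective L := (LinearMap.injective_iff_surjective).mp hLinj
  obtain ⟨v, hv⟩ := hLsurj U
  set p₀ : Polynomial.degreeLT ℝ (η + 1) := e.symm v with hp₀
  have hTp₀ : T p₀ = U := hv
  refine ⟨(p₀ : ℝ[X]), ⟨degree_lt_succ_iff.mp (Polynomial.mem_degreeLT.mp p₀.2),
    fun i => congrFun hTp₀ i⟩, ?_⟩
  intro p' ⟨hd', hU'⟩
  have hmem : p' ∈ Polynomial.degreeLT ℝ (η + 1) :=
    Polynomial.mem_degreeLT.mpr (degree_lt_succ_iff.mpr hd')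
  have : T ⟨p', hmem⟩ = U := funext fun i => hU' i
  have := hTinj (this.trans hTp₀.symm)
  exact congrArg Subtype.val this
end

section
/- Let V be a vector space over ℝ, let S : V → V be a linear map, let τ > 0, let l ≥ 1, let k₁, …, k_l ∈ ℕ, and let t₁, …, t_l ∈ ℝ. Define the i-th meso step Φ_i : V → V by Φ_i(U) = S^{k_i}U + (t_i/τ)·(S^{k_i + 1}U − S^{k_i}U). Then the composite GPD type-I macro step Φ_l ∘ ⋯ ∘ Φ₂ ∘ Φ₁ equals the linear map S^{k} ∘ Π_{i=1}^{l} ( id + (t_i/τ)·(S − id) ), where k = k₁ + ⋯ + k_l. -/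
section
variable {V : Type*} [AddCommGroup V] [Module ℝ V]

private lemma gpd_comm_S (S : Module.End ℝ V) (c : ℝ) :
    Commute S (1 + c • (S - 1)) :=
  (Commute.one_right S).add_right
    (((Commute.refl S).sub_right (Commute.one_right S)).smul_right c)

private lemma gpd_comm_g (S : Module.End ℝ V) (c : ℝ) {y : Module.End ℝ V}
    (h : Commute S y) : Commute (1 + c • (S - 1)) y :=
  (Commute.one_left y).add_left (((h).sub_left (Commute.one_left y)).smul_left c)

private lemma gpd_aux (S : Module.End ℝ V) (L : List (ℕ × ℝ)) :
    ((L.map fun p => S ^ p.1 + p.2 • (S ^ (p.1 + 1) - S ^ p.1))).reverse.prod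
      = S ^ (L.map Prod.fst).sum * (L.map fun p => 1 + p.2 • (S - 1)).prod := by
  induction L with
  | nil => simp
  | cons p L ih =>
    have hSP : Commute S (L.map fun p => 1 + p.2 • (S - 1)).prod := by
      apply Commute.list_prod_right
      intro x hx
      simp only [List.mem_map] at hx
      obtain ⟨q, -, rfl⟩ := hx
      exact gpd_comm_S S q.2
    have hgP : Commute (1 + p.2 • (S - 1)) (L.map fun p => 1 + p.2 • (S - 1)).prod :=
      gpd_comm_g S p.2 hSP
    have hΦ : S ^ p.1 + p.2 • (S ^ (p.1 + 1) - S ^ p.1)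
        = S ^ p.1 * (1 + p.2 • (S - 1)) := by
      rw [mul_add, mul_one, mul_smul_comm, mul_sub, mul_one, ← pow_succ]
    simp only [List.map_cons, List.reverse_cons, List.prod_append, List.prod_cons,
      List.prod_nil, List.sum_cons, mul_one, ih, hΦ]
    rw [pow_add, mul_assoc, ← mul_assoc ((L.map fun p => 1 + p.2 • (S - 1)).prod),
      ← (hSP.pow_left p.1).eq, mul_assoc (S ^ p.1), ← hgP.eq,
      ← mul_assoc, ← mul_assoc, (Commute.pow_pow_self S _ p.1).eq, mul_assoc]

end

/-- For a linear gap-tooth timestepper `S`, the composite GPD type-I macro step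
`Φ_l ∘ ⋯ ∘ Φ₁`, where `Φ_i U = S^{k_i} U + (t_i/τ)·(S^{k_i+1} U − S^{k_i} U)`,
equals `S^K ∘ Π_{i=1}^{l} (id + (t_i/τ)·(S − id))` with `K = k₁ + ⋯ + k_l`. -/
theorem stmt_6 {V : Type*} [AddCommGroup V] [Module ℝ V]
    (S : Module.End ℝ V) (τ : ℝ) (hτ : 0 < τ)
    (l : ℕ) (hl : 1 ≤ l) (k : Fin l → ℕ) (t : Fin l → ℝ)
    (Φ : Fin l → Module.End ℝ V)
    (hΦ : ∀ i, Φ i = S ^ (k i) + (t i / τ) • (S ^ (k i + 1) - S ^ (k i))) :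
    ((List.ofFn Φ).reverse).prod
      = S ^ (∑ i, k i)
        * ((List.ofFn fun i => (1 : Module.End ℝ V) + (t i / τ) • (S - 1))).prod := by
  have h := gpd_aux S (List.ofFn fun i => (k i, t i / τ))
  simp only [List.map_ofFn, Function.comp_def] at h
  rw [funext hΦ, h, List.sum_ofFn]
end

section
/- Let V be a vector space over ℝ, let S : V → V be a linear map, let τ > 0, and let t₁, …, t_m ∈ ℝ be extrapolation times. For any l, any k₁, …, k_l ∈ ℕ, and any assignment interleaving the groups of S-applications with the m forward-Euler extrapolations (each extrapolation of length t_i given by U ↦ S^{k}U + (t_i/τ)(S^{k+1}U − S^{k}U) applied after its group of timesteppers, in either GPD type-I or GPD type-II ordering), the resulting composite macro step equals S^{K} ∘ Π_{i=1}^{m} ( id + (t_i/τ)·(S − id) ), where K = k₁ + ⋯ + k_l. Consequently, when the microsimulator is linear, the macro update depends only on the total number K of gap-tooth timesteppers and on the multiset of extrapolation times {t₁, …, t_m}, and not on how the timesteppers are grouped or on the ordering of groups and extrapolations; in particular, the GPD type-I scheme with l groups and extrapolation times t₁, …, t_l gives the same result as the GPD type-II scheme with l + 1 groups (same total K) and the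 same extrapolation times. -/
/-- A step of a generalized patch dynamics macro step: `.inl k` is a bare group of `k`
gap-tooth timesteppers, while `.inr (k, t)` is a group of `k` gap-tooth timesteppers
followed by a forward-Euler extrapolation of length `t`. -/
noncomputable def gpdStepEnd {V : Type*} [AddCommGroup V] [Module ℝ V]
    (S : Module.End ℝ V) (τ : ℝ) : ℕ ⊕ (ℕ × ℝ) → Module.End ℝ V
  | .inl k => S ^ k
  | .inr (k, t) => S ^ k + (t / τ) • (S ^ (k + 1) - S ^ k)

/-- The number of gap-tooth timesteppers in a step. -/
def gpdStepCount : ℕ ⊕ (ℕ × ℝ) → ℕ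
  | .inl k => k
  | .inr (k, _) => k

/-- The extrapolation times occurring in a list of steps, in order. -/
def gpdStepTimes : List (ℕ ⊕ (ℕ × ℝ)) → List ℝ :=
  List.filterMap fun s => match s with | .inl _ => none | .inr (_, t) => some t

section Aux
variable {V : Type*} [AddCommGroup V] [Module ℝ V]

lemma commute_S_factor (S : Module.End ℝ V) (a : ℝ) :
    Commute S (1 + a • (S - 1)) := by
  have h1 : Commute S (S - 1) := (Commute.refl S).sub_right (Commute.one_right S)
  exact (Commute.one_right S).add_right (h1.smul_right a)

lemma commute_factor (S : Module.End ℝ V) (a b : ℝ) :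
    Commute (1 + a • (S - 1)) ((1 : Module.End ℝ V) + b • (S - 1)) := by
  have h1 : Commute (S - 1) ((1 : Module.End ℝ V) + b • (S - 1)) := by
    exact ((commute_S_factor S b).sub_left (Commute.one_left _))
  exact (Commute.one_left _).add_left (h1.smul_left a)

lemma pairwise_commute (S : Module.End ℝ V) (l : List ℝ) (τ : ℝ) :
    (l.map fun a => (1 : Module.End ℝ V) + (a / τ) • (S - 1)).Pairwise Commute := by
  induction l with
  | nil => simp
  | cons x xs ih =>
    simp only [List.map_cons, List.pairwise_cons]
    refine ⟨?_, ih⟩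
    intro y hy
    simp only [List.mem_map] at hy
    obtain ⟨a, _, rfl⟩ := hy
    exact commute_factor S _ _

lemma commute_pow_prod (S : Module.End ℝ V) (k : ℕ) (l : List ℝ) (τ : ℝ) :
    Commute (S ^ k) (l.map fun a => (1 : Module.End ℝ V) + (a / τ) • (S - 1)).prod := by
  apply Commute.list_prod_right
  intro y hy
  simp only [List.mem_map] at hy
  obtain ⟨a, _, rfl⟩ := hy
  exact ((commute_S_factor S _).pow_left k)

lemma gpd_aux_s8 (S : Module.End ℝ V) (τ : ℝ) (steps : List (ℕ ⊕ (ℕ × ℝ))) :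
    ((steps.map (gpdStepEnd S τ)).reverse).prod
      = S ^ (steps.map gpdStepCount).sum
        * ((gpdStepTimes steps).map fun a => (1 : Module.End ℝ V) + (a / τ) • (S - 1)).prod := by
  induction steps with
  | nil => simp [gpdStepTimes]
  | cons s rest ih =>
    rw [List.map_cons, List.reverse_cons, List.prod_append, ih, List.prod_singleton]
    cases s with
    | inl k =>
      have : gpdStepTimes (Sum.inl k :: rest) = gpdStepTimes rest := by
        simp [gpdStepTimes]
      rw [this]
      simp only [gpdStepEnd, gpdStepCount, List.map_cons, List.sum_cons]
      rw [mul_assoc, ← (commute_pow_prod S k (gpdStepTimes rest) τ).eq, ← mul_assoc,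
        ← pow_add, Nat.add_comm]
    | inr p =>
      obtain ⟨k, a⟩ := p
      have ht : gpdStepTimes (Sum.inr (k, a) :: rest) = a :: gpdStepTimes rest := by
        simp [gpdStepTimes]
      rw [ht]
      simp only [gpdStepEnd, gpdStepCount, List.map_cons, List.sum_cons, List.prod_cons]
      have hfac : S ^ k + (a / τ) • (S ^ (k + 1) - S ^ k)
          = S ^ k * ((1 : Module.End ℝ V) + (a / τ) • (S - 1)) := by
        rw [mul_add, mul_one, mul_smul_comm, mul_sub, mul_one, ← pow_succ]
      rw [hfac]
      set P := ((gpdStepTimes rest).map fun a => (1 : Module.End ℝ V) + (a / τ) • (S - 1)).prod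
      set g : Module.End ℝ V := (1 : Module.End ℝ V) + (a / τ) • (S - 1) with hg
      have hPg : Commute P g := by
        apply Commute.list_prod_left
        intro y hy
        simp only [List.mem_map] at hy
        obtain ⟨b, _, rfl⟩ := hy
        exact commute_factor S _ _
      calc S ^ (rest.map gpdStepCount).sum * P * (S ^ k * g)
          = S ^ (rest.map gpdStepCount).sum * (P * S ^ k) * g := by
            simp only [mul_assoc]
        _ = S ^ (rest.map gpdStepCount).sum * (S ^ k * P) * g := by
            rw [(commute_pow_prod S k (gpdStepTimes rest) τ).eq]
        _ = S ^ (k + (rest.map gpdStepCount).sum) * (g * P) := by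
            rw [pow_add, ← hPg.eq]
            simp only [← mul_assoc]
            rw [pow_mul_comm]
end Aux


/-- For a linear gap-tooth timestepper `S`, any interleaving of groups of timesteppers
with the `m` forward-Euler extrapolations of lengths `t₁, …, t_m` (each extrapolation
`U ↦ S^k U + (t_i/τ)(S^{k+1} U − S^k U)` applied after its group of timesteppers, covering
both the GPD type-I and GPD type-II orderings) yields the composite macro step
`S^K ∘ Π_{i=1}^{m} (id + (t_i/τ)·(S − id))`, where `K` is the total number of
timesteppers; hence the macro update depends only on `K` and on the multiset of
extrapolation times. -/
theorem stmt_8 {V : Type*} [AddCommGroup V] [Module ℝ V]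
    (S : Module.End ℝ V) (τ : ℝ) (hτ : 0 < τ)
    (m : ℕ) (t : Fin m → ℝ)
    (steps : List (ℕ ⊕ (ℕ × ℝ)))
    (htimes : (↑(gpdStepTimes steps) : Multiset ℝ) = ↑(List.ofFn t))
    (K : ℕ) (hK : (steps.map gpdStepCount).sum = K) :
    ((steps.map (gpdStepEnd S τ)).reverse).prod
      = S ^ K * ((List.ofFn fun i => (1 : Module.End ℝ V) + (t i / τ) • (S - 1))).prod := by
  rw [gpd_aux_s8, hK]
  congr 1
  have hperm : List.Perm (gpdStepTimes steps) (List.ofFn t) := Multiset.coe_eq_coe.mp htimes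
  have := (hperm.map fun a => (1 : Module.End ℝ V) + (a / τ) • (S - 1)).prod_eq'
    (pairwise_commute S _ τ)
  rw [this, List.map_ofFn]
  rfl
end
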